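/- Suppose the dataset satisfies ε–double–non-separation for some ε > 0: for every (v, w) with ‖v‖² + ‖w‖² = 1, either there exists i with yᵢ = 1 and vᵀxᵢ + wᵀzᵢ ≤ -ε, or there exists i with yᵢ = 0 and min(vᵀxᵢ, wᵀzᵢ) ≥ ε. Then for all unit directions (v, w) and all t ≥ 0, L(tv, tw) ≤ log 2 - εt, where L is the zero-inflated logistic log-likelihood; consequently sup over unit (v,w) of L(tv, tw) tends to -∞ as t → ∞. -/

import Mathlib

noncomputable def F (μ : ℝ) : ℝ := Real.exp μ / (1 + Real.exp μ)

noncomputable def L {n d p : ℕ} (y : Fin n → ℝ) (x : Fin n → Fin d → ℝ)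
    (z : Fin n → Fin p → ℝ) (β : Fin d → ℝ) (γ : Fin p → ℝ) : ℝ :=
  ∑ i, (y i * Real.log (F (∑ l, γ l * z i l) * F (∑ l, β l * x i l))
    + (1 - y i) * Real.log (1 - F (∑ l, γ l * z i l) * F (∑ l, β l * x i l)))

lemma denom_pos (a : ℝ) : 0 < 1 + Real.exp a := by positivity

lemma F_pos (a : ℝ) : 0 < F a := by
  unfold F; exact div_pos (Real.exp_pos a) (denom_pos a)

lemma F_lt_one (a : ℝ) : F a < 1 := by
  unfold F
  rw [div_lt_one (denom_pos a)]
  linarith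

lemma F_le_exp (a : ℝ) : F a ≤ Real.exp a := by
  unfold F
  rw [div_le_iff₀ (denom_pos a)]
  nlinarith [Real.exp_pos a]

lemma one_sub_F_le (a : ℝ) : 1 - F a ≤ Real.exp (-a) := by
  have he := Real.exp_pos a
  have h : 1 - F a = 1 / (1 + Real.exp a) := by
    unfold F; field_simp; ring
  rw [h, Real.exp_neg, inv_eq_one_div]
  exact one_div_le_one_div_of_le he (by linarith)

lemma one_sub_FF_le (a b : ℝ) : 1 - F a * F b ≤ Real.exp (-a) + Real.exp (-b) := by
  have h1 := one_sub_F_le a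
  have h2 := one_sub_F_le b
  nlinarith [F_pos a, F_pos b, F_lt_one a, F_lt_one b]

lemma term_nonpos (yi u v : ℝ) (hy : yi = 0 ∨ yi = 1) :
    yi * Real.log (F u * F v) + (1 - yi) * Real.log (1 - F u * F v) ≤ 0 := by
  have hp : 0 < F u * F v := mul_pos (F_pos u) (F_pos v)
  have hlt : F u * F v < 1 := by nlinarith [F_pos u, F_pos v, F_lt_one u, F_lt_one v]
  have h1 : Real.log (F u * F v) ≤ 0 := Real.log_nonpos hp.le hlt.le
  have h2 : Real.log (1 - F u * F v) ≤ 0 := Real.log_nonpos (by linarith) (by linarith)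
  rcases hy with h | h <;> simp [h] <;> linarith

theorem loglik_coercive_bound {n d q : ℕ}
    (y : Fin n → ℝ) (x : Fin n → Fin d → ℝ) (z : Fin n → Fin q → ℝ)
    (hy : ∀ i, y i = 0 ∨ y i = 1) (ε : ℝ) (hε : 0 < ε)
    (hnonsep : ∀ (v : Fin d → ℝ) (w : Fin q → ℝ),
      (∑ l, (v l) ^ 2) + (∑ l, (w l) ^ 2) = 1 →
      (∃ i, y i = 1 ∧ (∑ l, v l * x i l) + (∑ l, w l * z i l) ≤ -ε) ∨
      (∃ i, y i = 0 ∧ ε ≤ min (∑ l, v l * x i l) (∑ l, w l * z i l))) :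
    (∀ (v : Fin d → ℝ) (w : Fin q → ℝ),
      (∑ l, (v l) ^ 2) + (∑ l, (w l) ^ 2) = 1 →
      ∀ t : ℝ, 0 ≤ t → L y x z (t • v) (t • w) ≤ Real.log 2 - ε * t) ∧
    (∀ M : ℝ, ∃ T : ℝ, ∀ t ≥ T, ∀ (v : Fin d → ℝ) (w : Fin q → ℝ),
      (∑ l, (v l) ^ 2) + (∑ l, (w l) ^ 2) = 1 →
      L y x z (t • v) (t • w) ≤ M) := by
  have main : ∀ (v : Fin d → ℝ) (w : Fin q → ℝ),
      (∑ l, (v l) ^ 2) + (∑ l, (w l) ^ 2) = 1 →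
      ∀ t : ℝ, 0 ≤ t → L y x z (t • v) (t • w) ≤ Real.log 2 - ε * t := by
    intro v w hvw t ht
    have hsum : ∀ i, (∑ l, (t • v) l * x i l) = t * ∑ l, v l * x i l := by
      intro i; rw [Finset.mul_sum]; apply Finset.sum_congr rfl; intros
      simp [Pi.smul_apply, smul_eq_mul, mul_assoc]
    have hsumz : ∀ i, (∑ l, (t • w) l * z i l) = t * ∑ l, w l * z i l := by
      intro i; rw [Finset.mul_sum]; apply Finset.sum_congr rfl; intros
      simp [Pi.smul_apply, smul_eq_mul, mul_assoc]
    set g : Fin n → ℝ := fun i =>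
      y i * Real.log (F (∑ l, (t • w) l * z i l) * F (∑ l, (t • v) l * x i l))
        + (1 - y i) * Real.log (1 - F (∑ l, (t • w) l * z i l) * F (∑ l, (t • v) l * x i l))
      with hg
    have hL : L y x z (t • v) (t • w) = ∑ i, g i := rfl
    have hgnonpos : ∀ i, g i ≤ 0 := fun i => term_nonpos _ _ _ (hy i)
    rcases hnonsep v w hvw with ⟨i, hyi, hle⟩ | ⟨i, hyi, hge⟩
    · -- positive case
      have hLg : L y x z (t • v) (t • w) ≤ g i := by
        rw [hL]
        calc ∑ j, g j ≤ ∑ j, (if j = i then g i else 0) := by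
              apply Finset.sum_le_sum
              intro j _
              by_cases h : j = i
              · simp [h]
              · simp [h]; exact hgnonpos j
          _ = g i := by simp
      have hgi : g i ≤ Real.log 2 - ε * t := by
        rw [hg]
        simp only [hyi]
        have hp : 0 < F (∑ l, (t • w) l * z i l) * F (∑ l, (t • v) l * x i l) :=
          mul_pos (F_pos _) (F_pos _)
        have h1 : F (∑ l, (t • w) l * z i l) * F (∑ l, (t • v) l * x i l)
            ≤ Real.exp ((∑ l, (t • w) l * z i l) + (∑ l, (t • v) l * x i l)) := by
          rw [Real.exp_add]
          exact mul_le_mul (F_le_exp _) (F_le_exp _) (F_pos _).le (Real.exp_pos _).le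
        have h2 : Real.log (F (∑ l, (t • w) l * z i l) * F (∑ l, (t • v) l * x i l))
            ≤ (∑ l, (t • w) l * z i l) + (∑ l, (t • v) l * x i l) := by
          calc Real.log _ ≤ Real.log (Real.exp _) := Real.log_le_log hp h1
            _ = _ := Real.log_exp _
        have h3 : (∑ l, (t • w) l * z i l) + (∑ l, (t • v) l * x i l) ≤ -ε * t := by
          rw [hsum, hsumz]
          have := mul_le_mul_of_nonneg_left hle ht
          nlinarith
        have hlog2 : (0:ℝ) ≤ Real.log 2 := Real.log_nonneg (by norm_num)
        simp only [one_mul, sub_self, zero_mul, add_zero]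
        linarith
      linarith
    · -- zero case
      have hLg : L y x z (t • v) (t • w) ≤ g i := by
        rw [hL]
        calc ∑ j, g j ≤ ∑ j, (if j = i then g i else 0) := by
              apply Finset.sum_le_sum
              intro j _
              by_cases h : j = i
              · simp [h]
              · simp [h]; exact hgnonpos j
          _ = g i := by simp
      have hgi : g i ≤ Real.log 2 - ε * t := by
        rw [hg]
        simp only [hyi]
        set a := ∑ l, (t • w) l * z i l with hadef
        set b := ∑ l, (t • v) l * x i l with hbdef
        have ha : ε * t ≤ a := by
          rw [hadef, hsumz i]
          calc ε * t = t * ε := mul_comm _ _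
            _ ≤ t * (∑ l, w l * z i l) :=
              mul_le_mul_of_nonneg_left (le_trans hge (min_le_right _ _)) ht
        have hb : ε * t ≤ b := by
          rw [hbdef, hsum i]
          calc ε * t = t * ε := mul_comm _ _
            _ ≤ t * (∑ l, v l * x i l) :=
              mul_le_mul_of_nonneg_left (le_trans hge (min_le_left _ _)) ht
        have hp : 0 < 1 - F a * F b := by
          nlinarith [F_pos a, F_pos b, F_lt_one a, F_lt_one b]
        have h1 : 1 - F a * F b ≤ Real.exp (-a) + Real.exp (-b) := one_sub_FF_le a b
        have h2 : Real.exp (-a) + Real.exp (-b) ≤ 2 * Real.exp (-(ε * t)) := by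
          have ea : Real.exp (-a) ≤ Real.exp (-(ε * t)) := Real.exp_le_exp.2 (by linarith)
          have eb : Real.exp (-b) ≤ Real.exp (-(ε * t)) := Real.exp_le_exp.2 (by linarith)
          linarith
        have h3 : Real.log (1 - F a * F b) ≤ Real.log (2 * Real.exp (-(ε * t))) :=
          Real.log_le_log hp (le_trans h1 h2)
        have h4 : Real.log (2 * Real.exp (-(ε * t))) = Real.log 2 - ε * t := by
          rw [Real.log_mul (by norm_num) (Real.exp_ne_zero _), Real.log_exp]; ring
        simp only [zero_mul, sub_zero, one_mul, zero_add]
        linarith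
      linarith
  refine ⟨main, fun M => ⟨max 0 ((Real.log 2 - M) / ε), fun t ht v w hvw => ?_⟩⟩
  have ht0 : 0 ≤ t := le_trans (le_max_left _ _) ht
  have ht1 : (Real.log 2 - M) / ε ≤ t := le_trans (le_max_right _ _) ht
  have : Real.log 2 - M ≤ ε * t := by
    rw [div_le_iff₀ hε] at ht1; linarith
  have := main v w hvw t ht0
  linarith
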